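/- Let η : ℝ⁵ → ℝ⁵ → ℝ be the bilinear form with signature (-,+,+,+,+). Fix a nonzero null vector ℓ (η(ℓ,ℓ) = 0) and a scalar field φ(x) = (η(x,ℓ))^{-w} defined on the region η(x,ℓ) > 0 of the hyperboloid {x : η(x,x) = 1}. Then φ satisfies (□ − m²)φ = 0 on de Sitter space, where □ is the Laplace–Beltrami operator of the induced metric, if and only if w(w−3) = −m², i.e. w = 3/2 ± √(9/4 − m²). -/

import Mathlib

namespace Stmt7

/-- The Minkowski bilinear form of signature `(-,+,+,+,+)` on `ℝ⁵`. -/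
noncomputable def eta (x y : Fin 5 → ℝ) : ℝ :=
  ∑ i : Fin 5, (if i = (0 : Fin 5) then (-1 : ℝ) else 1) * x i * y i

/-- The flat wave operator `□ = η^{μν} ∂_μ ∂_ν` on `ℝ^{1,4}`. -/
noncomputable def flatBox (f : (Fin 5 → ℝ) → ℝ) (x : Fin 5 → ℝ) : ℝ :=
  ∑ i : Fin 5, (if i = (0 : Fin 5) then (-1 : ℝ) else 1) *
    fderiv ℝ (fun y => fderiv ℝ f y (Pi.single i 1)) x (Pi.single i 1)

/-- The Laplace–Beltrami operator of the induced metric on the de Sitter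
hyperboloid `{x : η(x,x) = 1}`: apply the flat wave operator to the
degree-zero homogeneous extension `y ↦ f(y/√(η(y,y)))`. -/
noncomputable def dsBox (f : (Fin 5 → ℝ) → ℝ) (x : Fin 5 → ℝ) : ℝ :=
  flatBox (fun y => f ((Real.sqrt (eta y y))⁻¹ • y)) x

/-- signature coefficients -/
noncomputable def qq (i : Fin 5) : ℝ := if i = (0 : Fin 5) then (-1 : ℝ) else 1

lemma eta_def (x y : Fin 5 → ℝ) : eta x y = ∑ i : Fin 5, qq i * x i * y i := rfl

lemma eta_smul_left (c : ℝ) (x y : Fin 5 → ℝ) : eta (c • x) y = c * eta x y := by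
  simp only [eta_def, Finset.mul_sum, Pi.smul_apply, smul_eq_mul]
  exact Finset.sum_congr rfl fun i _ => by ring

lemma continuous_etaL (ℓ : Fin 5 → ℝ) : Continuous fun y : Fin 5 → ℝ => eta y ℓ := by
  unfold eta; fun_prop

lemma continuous_etaQ : Continuous fun y : Fin 5 → ℝ => eta y y := by
  unfold eta; fun_prop

/-- linear functional from coefficients -/
noncomputable def Dlin (c : Fin 5 → ℝ) : (Fin 5 → ℝ) →L[ℝ] ℝ :=
  ∑ i : Fin 5, c i • ContinuousLinearMap.proj i

lemma Dlin_apply (c v : Fin 5 → ℝ) : Dlin c v = ∑ i : Fin 5, c i * v i := by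
  simp [Dlin]

lemma Dlin_single (c : Fin 5 → ℝ) (j : Fin 5) : Dlin c (Pi.single j 1) = c j := by
  rw [Dlin_apply]
  rw [Finset.sum_eq_single j]
  · simp
  · intro i _ hij; simp [Pi.single_apply, hij.symm]
  · simp

lemma hasFDerivAt_etaL (ℓ y : Fin 5 → ℝ) :
    HasFDerivAt (fun z => eta z ℓ) (Dlin fun i => qq i * ℓ i) y := by
  have h : ∀ i : Fin 5, HasFDerivAt (fun z : Fin 5 → ℝ => qq i * z i * ℓ i)
      ((qq i * ℓ i) • ContinuousLinearMap.proj (R := ℝ) (φ := fun _ : Fin 5 => ℝ) i) y := by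
    intro i
    have := (((ContinuousLinearMap.proj (R := ℝ) (φ := fun _ : Fin 5 => ℝ) i).hasFDerivAt
      (x := y)).const_mul (qq i)).mul_const (ℓ i)
    simpa [smul_smul, mul_comm] using this
  have := HasFDerivAt.fun_sum (u := Finset.univ) (fun i _ => h i)
  simpa [eta, qq, Dlin] using this

lemma hasFDerivAt_etaQ (y : Fin 5 → ℝ) :
    HasFDerivAt (fun z => eta z z) (Dlin fun i => 2 * qq i * y i) y := by
  have h : ∀ i : Fin 5, HasFDerivAt (fun z : Fin 5 → ℝ => qq i * z i * z i)
      ((2 * qq i * y i) • ContinuousLinearMap.proj (R := ℝ) (φ := fun _ : Fin 5 => ℝ) i) y := by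
    intro i
    have hp := (ContinuousLinearMap.proj (R := ℝ) (φ := fun _ : Fin 5 => ℝ) i).hasFDerivAt (x := y)
    have := (hp.const_mul (qq i)).mul hp
    have h2 : (qq i * y i) • ContinuousLinearMap.proj (R := ℝ) (φ := fun _ : Fin 5 => ℝ) i
        + y i • (qq i • ContinuousLinearMap.proj (R := ℝ) (φ := fun _ : Fin 5 => ℝ) i)
        = (2 * qq i * y i) • ContinuousLinearMap.proj (R := ℝ) (φ := fun _ : Fin 5 => ℝ) i := by
      ext v; simp; ring
    simp only [ContinuousLinearMap.proj_apply] at this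
    rw [h2] at this
    exact this
  have := HasFDerivAt.fun_sum (u := Finset.univ) (fun i _ => h i)
  simpa [eta, qq, Dlin] using this

lemma master (p r : ℝ) (ℓ : Fin 5 → ℝ) {y : Fin 5 → ℝ} (hA : 0 < eta y y) (hB : 0 < eta y ℓ) :
    HasFDerivAt (fun z => eta z z ^ p * eta z ℓ ^ r)
      (Dlin fun i => eta y ℓ ^ r * (p * eta y y ^ (p - 1) * (2 * qq i * y i))
        + eta y y ^ p * (r * eta y ℓ ^ (r - 1) * (qq i * ℓ i))) y := by
  have h1 : HasFDerivAt (fun z => eta z z ^ p)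
      ((p * eta y y ^ (p - 1)) • Dlin fun i => 2 * qq i * y i) y :=
    (hasFDerivAt_etaQ y).rpow_const (Or.inl hA.ne')
  have h2 : HasFDerivAt (fun z => eta z ℓ ^ r)
      ((r * eta y ℓ ^ (r - 1)) • Dlin fun i => qq i * ℓ i) y :=
    (hasFDerivAt_etaL ℓ y).rpow_const (Or.inl hB.ne')
  have h := h1.mul h2
  have heq : eta y y ^ p • (r * eta y ℓ ^ (r - 1)) • Dlin (fun i => qq i * ℓ i)
      + eta y ℓ ^ r • (p * eta y y ^ (p - 1)) • Dlin (fun i => 2 * qq i * y i)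
      = Dlin fun i => eta y ℓ ^ r * (p * eta y y ^ (p - 1) * (2 * qq i * y i))
        + eta y y ^ p * (r * eta y ℓ ^ (r - 1) * (qq i * ℓ i)) := by
    ext v
    simp [Dlin_apply, Finset.mul_sum, ← Finset.sum_add_distrib]
    exact Finset.sum_congr rfl fun i _ => by ring
  rw [heq] at h
  exact h

section Main

variable (ℓ : Fin 5 → ℝ) (w : ℝ)

/-- the homogeneous extension restricted form -/
noncomputable def FF (y : Fin 5 → ℝ) : ℝ := eta ((Real.sqrt (eta y y))⁻¹ • y) ℓ ^ (-w)

/-- the nice product form -/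
noncomputable def GG (y : Fin 5 → ℝ) : ℝ := eta y y ^ (w / 2) * eta y ℓ ^ (-w)

/-- the open region -/
def UU : Set (Fin 5 → ℝ) := {y | 0 < eta y y ∧ 0 < eta y ℓ}

lemma isOpen_UU : IsOpen (UU ℓ) := by
  have h1 : IsOpen {y : Fin 5 → ℝ | 0 < eta y y} :=
    isOpen_lt continuous_const continuous_etaQ
  have h2 : IsOpen {y : Fin 5 → ℝ | 0 < eta y ℓ} :=
    isOpen_lt continuous_const (continuous_etaL ℓ)
  exact h1.inter h2

lemma FF_eq_GG {y : Fin 5 → ℝ} (hy : y ∈ UU ℓ) : FF ℓ w y = GG ℓ w y := by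
  obtain ⟨hA, hB⟩ := hy
  unfold FF GG
  rw [eta_smul_left, Real.mul_rpow (by positivity) hB.le]
  congr 1
  rw [Real.inv_rpow (Real.sqrt_nonneg _), Real.rpow_neg (Real.sqrt_nonneg _), inv_inv,
    Real.sqrt_eq_rpow, ← Real.rpow_mul hA.le]
  congr 1
  ring

/-- first-derivative coefficients -/
noncomputable def cc1 (y : Fin 5 → ℝ) (i : Fin 5) : ℝ :=
  eta y ℓ ^ (-w) * (w / 2 * eta y y ^ (w / 2 - 1) * (2 * qq i * y i))
    + eta y y ^ (w / 2) * (-w * eta y ℓ ^ (-w - 1) * (qq i * ℓ i))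

lemma fderiv_FF {y : Fin 5 → ℝ} (hy : y ∈ UU ℓ) :
    fderiv ℝ (FF ℓ w) y = Dlin (cc1 ℓ w y) := by
  have hev : FF ℓ w =ᶠ[nhds y] GG ℓ w :=
    Filter.eventuallyEq_of_mem ((isOpen_UU ℓ).mem_nhds hy) (fun z hz => FF_eq_GG ℓ w hz)
  rw [hev.fderiv_eq]
  have h := master (w / 2) (-w) ℓ hy.1 hy.2
  unfold GG
  rw [h.fderiv]
  rfl

lemma fderiv_FF_single {y : Fin 5 → ℝ} (hy : y ∈ UU ℓ) (i : Fin 5) :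
    fderiv ℝ (FF ℓ w) y (Pi.single i 1) = cc1 ℓ w y i := by
  rw [fderiv_FF ℓ w hy, Dlin_single]

/-- master coefficients -/
noncomputable def mc (p r : ℝ) (y : Fin 5 → ℝ) (i : Fin 5) : ℝ :=
  eta y ℓ ^ r * (p * eta y y ^ (p - 1) * (2 * qq i * y i))
    + eta y y ^ p * (r * eta y ℓ ^ (r - 1) * (qq i * ℓ i))

/-- structured form of the first directional derivative -/
noncomputable def dd (i : Fin 5) (y : Fin 5 → ℝ) : ℝ :=
  w * qq i * (eta y y ^ (w / 2 - 1) * eta y ℓ ^ (-w) * y i)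
    + -w * qq i * ℓ i * (eta y y ^ (w / 2) * eta y ℓ ^ (-w - 1))

lemma cc1_eq_dd (y : Fin 5 → ℝ) (i : Fin 5) : cc1 ℓ w y i = dd ℓ w i y := by
  unfold cc1 dd; ring

lemma hasFDerivAt_dd {x : Fin 5 → ℝ} (hx : x ∈ UU ℓ) (i : Fin 5) :
    HasFDerivAt (dd ℓ w i)
      ((w * qq i) • ((eta x x ^ (w / 2 - 1) * eta x ℓ ^ (-w)) •
          ContinuousLinearMap.proj (R := ℝ) (φ := fun _ : Fin 5 => ℝ) i
          + x i • Dlin (mc ℓ (w / 2 - 1) (-w) x))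
        + (-w * qq i * ℓ i) • Dlin (mc ℓ (w / 2) (-w - 1) x)) x := by
  have hp := (ContinuousLinearMap.proj (R := ℝ) (φ := fun _ : Fin 5 => ℝ) i).hasFDerivAt (x := x)
  have h1 := ((master (w / 2 - 1) (-w) ℓ hx.1 hx.2).mul hp).const_mul (w * qq i)
  have h2 := (master (w / 2) (-w - 1) ℓ hx.1 hx.2).const_mul (-w * qq i * ℓ i)
  exact h1.add h2

lemma second {x : Fin 5 → ℝ} (hx : x ∈ UU ℓ) (i : Fin 5) :
    fderiv ℝ (fun y => fderiv ℝ (FF ℓ w) y (Pi.single i 1)) x (Pi.single i 1)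
      = w * qq i * (eta x x ^ (w / 2 - 1) * eta x ℓ ^ (-w) + x i * mc ℓ (w / 2 - 1) (-w) x i)
        + -w * qq i * ℓ i * mc ℓ (w / 2) (-w - 1) x i := by
  have hev : (fun y => fderiv ℝ (FF ℓ w) y (Pi.single i 1)) =ᶠ[nhds x] dd ℓ w i :=
    Filter.eventuallyEq_of_mem ((isOpen_UU ℓ).mem_nhds hx)
      (fun z hz => by rw [fderiv_FF_single ℓ w hz]; exact cc1_eq_dd ℓ w z i)
  rw [hev.fderiv_eq, (hasFDerivAt_dd ℓ w hx i).fderiv]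
  simp [Dlin_single, Pi.single_eq_same]
  ring

lemma dsBox_val (hnull : eta ℓ ℓ = 0) (x : Fin 5 → ℝ) (hx1 : eta x x = 1)
    (hb : 0 < eta x ℓ) :
    dsBox (fun y => eta y ℓ ^ (-w)) x = (3 * w - w ^ 2) * eta x ℓ ^ (-w) := by
  have hx : x ∈ UU ℓ := ⟨by rw [hx1]; norm_num, hb⟩
  show flatBox (FF ℓ w) x = _
  unfold flatBox
  simp only [second ℓ w hx]
  unfold mc
  simp only [hx1, Real.one_rpow]
  have hB2 : eta x ℓ ^ (-w - 1) * eta x ℓ = eta x ℓ ^ (-w) := by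
    rw [← Real.rpow_add_one hb.ne']; congr 1; ring
  have hx5 := hx1
  have hn5 := hnull
  have hb5 : eta x ℓ = eta x ℓ := rfl
  rw [eta_def] at hx5 hn5
  rw [Fin.sum_univ_five] at hx5 hn5
  conv_lhs at hb5 => rw [eta_def, Fin.sum_univ_five]
  rw [Fin.sum_univ_five]
  simp only [qq, Fin.reduceEq, reduceIte, if_true] at hx5 hn5 hb5 ⊢
  linear_combination (w * (w - 2) * eta x ℓ ^ (-w)) * hx5
    + (w * (w + 1) * eta x ℓ ^ (-w - 1 - 1)) * hn5
    + (-2 * w ^ 2 * eta x ℓ ^ (-w - 1)) * hb5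
    + (-2 * w ^ 2) * hB2

end Main

lemma exists_point (ℓ : Fin 5 → ℝ) (hl0 : ℓ ≠ 0) (hnull : eta ℓ ℓ = 0) :
    ∃ x : Fin 5 → ℝ, eta x x = 1 ∧ 0 < eta x ℓ := by
  have hn := hnull
  rw [eta_def, Fin.sum_univ_five] at hn
  simp only [qq, Fin.reduceEq, reduceIte, if_true] at hn
  have h0 : ℓ 0 ≠ 0 := by
    intro h
    apply hl0
    funext i
    fin_cases i
    · exact h
    · show ℓ 1 = 0; nlinarith [sq_nonneg (ℓ 1), sq_nonneg (ℓ 2), sq_nonneg (ℓ 3), sq_nonneg (ℓ 4)]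
    · show ℓ 2 = 0; nlinarith [sq_nonneg (ℓ 1), sq_nonneg (ℓ 2), sq_nonneg (ℓ 3), sq_nonneg (ℓ 4)]
    · show ℓ 3 = 0; nlinarith [sq_nonneg (ℓ 1), sq_nonneg (ℓ 2), sq_nonneg (ℓ 3), sq_nonneg (ℓ 4)]
    · show ℓ 4 = 0; nlinarith [sq_nonneg (ℓ 1), sq_nonneg (ℓ 2), sq_nonneg (ℓ 3), sq_nonneg (ℓ 4)]
  have habs : (0:ℝ) < |ℓ 0| := abs_pos.mpr h0
  refine ⟨fun i => if i = 0 then 0 else ℓ i / |ℓ 0|, ?_, ?_⟩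
  · rw [eta_def, Fin.sum_univ_five]
    simp only [qq, Fin.reduceEq, reduceIte, if_true]
    have hsq : |ℓ 0| * |ℓ 0| = ℓ 0 * ℓ 0 := abs_mul_abs_self _
    field_simp
    linear_combination hn + (-1 : ℝ) * hsq
  · have : eta (fun i => if i = 0 then 0 else ℓ i / |ℓ 0|) ℓ = |ℓ 0| := by
      rw [eta_def, Fin.sum_univ_five]
      simp only [qq, Fin.reduceEq, reduceIte, if_true]
      have hsq : |ℓ 0| * |ℓ 0| = ℓ 0 * ℓ 0 := abs_mul_abs_self _
      field_simp
      linear_combination hn + (-1 : ℝ) * hsq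
    rw [this]; exact habs

lemma quad (w m : ℝ) (hm : m ^ 2 ≤ 9 / 4) :
    w * (w - 3) = -m ^ 2 ↔
      (w = 3 / 2 + Real.sqrt (9 / 4 - m ^ 2) ∨ w = 3 / 2 - Real.sqrt (9 / 4 - m ^ 2)) := by
  have hs : Real.sqrt (9 / 4 - m ^ 2) ^ 2 = 9 / 4 - m ^ 2 := Real.sq_sqrt (by linarith)
  constructor
  · intro h
    have hfac : (w - (3 / 2 + Real.sqrt (9 / 4 - m ^ 2)))
        * (w - (3 / 2 - Real.sqrt (9 / 4 - m ^ 2))) = 0 := by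
      linear_combination h - hs
    rcases mul_eq_zero.mp hfac with h1 | h1
    · left; linarith
    · right; linarith
  · rintro (h | h) <;> subst h <;> linear_combination hs

/-- For a nonzero null vector `ℓ`, the field `φ(x) = (η(x,ℓ))^{-w}` on the region
`η(x,ℓ) > 0` of the de Sitter hyperboloid satisfies `(□ - m²)φ = 0` iff
`w(w-3) = -m²`, i.e. iff `w = 3/2 ± √(9/4 - m²)`. -/
theorem stmt_7 (ℓ : Fin 5 → ℝ) (hl0 : ℓ ≠ 0) (hnull : eta ℓ ℓ = 0)
    (w m : ℝ) (hm : m ^ 2 ≤ 9 / 4) :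
    ((∀ x : Fin 5 → ℝ, eta x x = 1 → 0 < eta x ℓ →
        dsBox (fun y => eta y ℓ ^ (-w)) x - m ^ 2 * eta x ℓ ^ (-w) = 0)
      ↔ w * (w - 3) = -m ^ 2) ∧
    (w * (w - 3) = -m ^ 2 ↔
      (w = 3 / 2 + Real.sqrt (9 / 4 - m ^ 2) ∨
       w = 3 / 2 - Real.sqrt (9 / 4 - m ^ 2))) := by
  refine ⟨⟨?_, ?_⟩, quad w m hm⟩
  · intro h
    obtain ⟨x, hx1, hxb⟩ := exists_point ℓ hl0 hnull
    have hz := h x hx1 hxb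
    rw [dsBox_val ℓ w hnull x hx1 hxb] at hz
    have hBpos : 0 < eta x ℓ ^ (-w) := Real.rpow_pos_of_pos hxb _
    have h3 : (3 * w - w ^ 2 - m ^ 2) * eta x ℓ ^ (-w) = 0 := by linear_combination hz
    have h4 := (mul_eq_zero.mp h3).resolve_right hBpos.ne'
    linarith
  · intro h x hx1 hxb
    rw [dsBox_val ℓ w hnull x hx1 hxb]
    linear_combination (-(eta x ℓ ^ (-w))) * h

end Stmt7
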